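/- For α > 0, n a natural number, and β ≥ 0: ∫_0^∞ e^{-α x} x^n J₀(β √x) dx = (n!/α^{n+1}) e^{-β²/(4α)} L_n(β²/(4α)), where L_n is the n-th Laguerre polynomial. -/

import Mathlib

open MeasureTheory Real

/-- Bessel function of order 0, via its power series. -/
noncomputable def besselJ0 (z : ℝ) : ℝ :=
  ∑' m : ℕ, (-1 : ℝ) ^ m * (z / 2) ^ (2 * m) / ((m.factorial : ℝ)) ^ 2

/-- Laguerre polynomial. -/
noncomputable def laguerre (n : ℕ) (x : ℝ) : ℝ :=
  ∑ k ∈ Finset.range (n + 1), (-1 : ℝ) ^ k * (n.choose k) * x ^ k / k.factorial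

lemma lapJ0_integral_exp_pow (a : ℝ) (ha : 0 < a) (k : ℕ) :
    ∫ x in Set.Ioi (0:ℝ), Real.exp (-a * x) * x ^ k = k.factorial / a ^ (k+1) := by
  have h := Real.integral_rpow_mul_exp_neg_mul_Ioi (a := (k+1:ℝ)) (by positivity) ha
  rw [show ((k:ℝ)+1-1) = (k:ℝ) by ring] at h
  have heq : ∫ x in Set.Ioi (0:ℝ), Real.exp (-a * x) * x ^ k
      = ∫ t in Set.Ioi (0:ℝ), t ^ (k:ℝ) * Real.exp (-(a * t)) := by
    refine setIntegral_congr_fun measurableSet_Ioi (fun x hx => ?_)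
    rw [Real.rpow_natCast, neg_mul, mul_comm]
  rw [heq, h, Real.Gamma_nat_eq_factorial,
    show ((k:ℝ)+1) = ((k+1:ℕ):ℝ) by push_cast; ring, Real.rpow_natCast]
  rw [div_pow, one_pow]
  ring

lemma lapJ0_integrable_exp_pow (a : ℝ) (ha : 0 < a) (k : ℕ) :
    IntegrableOn (fun x => Real.exp (-a * x) * x ^ k) (Set.Ioi 0) := by
  apply integrable_of_isBigO_exp_neg (half_pos ha)
    (Continuous.continuousOn (by continuity))
  apply Asymptotics.IsLittleO.isBigO
  rw [Asymptotics.isLittleO_iff_tendsto (fun x h => absurd h (Real.exp_ne_zero _))]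
  have h2 := tendsto_rpow_mul_exp_neg_mul_atTop_nhds_zero (k:ℝ) (a/2) (half_pos ha)
  refine h2.congr' ?_
  filter_upwards [Filter.eventually_gt_atTop (0:ℝ)] with x hx
  rw [Real.rpow_natCast, eq_div_iff (Real.exp_ne_zero _), mul_comm (Real.exp (-a*x)) (x^k),
    mul_assoc, ← Real.exp_add, show -(a/2)*x + -(a/2)*x = -a*x by ring]

lemma lapJ0_choose_le_two_pow (a b : ℕ) : a.choose b ≤ 2 ^ a := by
  rcases le_or_gt b a with h | h
  · calc a.choose b ≤ ∑ m ∈ Finset.range (a+1), a.choose m :=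
        Finset.single_le_sum (fun i _ => Nat.zero_le _) (Finset.mem_range.mpr (by omega))
    _ = 2 ^ a := Nat.sum_range_choose a
  · simp [Nat.choose_eq_zero_of_lt h]

lemma lapJ0_lag_zero (n : ℕ) (t : ℝ) :
    ∀ k ∉ Finset.range (n+1), (-1 : ℝ) ^ k * (n.choose k) * t ^ k / k.factorial = 0 := by
  intro k hk
  rw [Finset.mem_range, not_lt] at hk
  rw [Nat.choose_eq_zero_of_lt (by omega)]
  simp

lemma lapJ0_key_identity (n : ℕ) (t : ℝ) :
    ∑' m : ℕ, (-1:ℝ)^m * ((n+m).choose m) * t^m / m.factorial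
      = Real.exp (-t) * laguerre n t := by
  set f : ℕ → ℝ := fun k => (-1 : ℝ) ^ k * (n.choose k) * t ^ k / k.factorial with hf
  set g : ℕ → ℝ := fun j => (-t) ^ j / j.factorial with hg
  have hfs : Summable fun k => ‖f k‖ :=
    summable_of_ne_finset_zero (s := Finset.range (n+1))
      (fun k hk => by rw [hf]; simp [lapJ0_lag_zero n t k hk])
  have hgs : Summable fun j => ‖g j‖ := by
    have := Real.summable_pow_div_factorial |t|
    apply this.congr
    intro j
    rw [hg]
    simp [abs_div, abs_pow, abs_neg]
  have hlag : laguerre n t = ∑' k, f k := by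
    rw [tsum_eq_sum (lapJ0_lag_zero n t)]
    rfl
  have hexp : Real.exp (-t) = ∑' j, g j := by
    rw [Real.exp_eq_exp_ℝ, NormedSpace.exp_eq_tsum_div]
  rw [hexp, hlag, mul_comm]
  rw [tsum_mul_tsum_eq_tsum_sum_antidiagonal_of_summable_norm hfs hgs]
  congr 1
  funext m
  have hterm : ∀ kl ∈ Finset.HasAntidiagonal.antidiagonal m,
      f kl.1 * g kl.2 = (-1:ℝ)^m * ((n.choose kl.1 * m.choose kl.2 : ℕ) : ℝ) * t^m / m.factorial := by
    rintro ⟨k, l⟩ hkl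
    rw [Finset.HasAntidiagonal.mem_antidiagonal] at hkl
    have hchoose : (m.choose l) * l.factorial * k.factorial = m.factorial := by
      have := Nat.choose_mul_factorial_mul_factorial (show l ≤ m by omega)
      rw [show m - l = k by omega] at this
      exact this
    have hk0 : (k.factorial : ℝ) ≠ 0 := Nat.cast_ne_zero.mpr k.factorial_ne_zero
    have hl0 : (l.factorial : ℝ) ≠ 0 := Nat.cast_ne_zero.mpr l.factorial_ne_zero
    have hm0 : (m.factorial : ℝ) ≠ 0 := Nat.cast_ne_zero.mpr m.factorial_ne_zero
    have hcast : ((m.choose l : ℝ)) * l.factorial * k.factorial = m.factorial := by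
      exact_mod_cast congrArg (Nat.cast : ℕ → ℝ) hchoose
    simp only [hf, hg]
    rw [show ((-t):ℝ)^l = (-1:ℝ)^l * t^l by rw [neg_pow]]
    field_simp
    rw [← hcast]
    push_cast
    subst hkl
    ring
  rw [Finset.sum_congr rfl hterm]
  rw [← Finset.sum_div, ← Finset.sum_mul, ← Finset.mul_sum, ← Nat.cast_sum]
  rw [show ∑ kl ∈ Finset.HasAntidiagonal.antidiagonal m, n.choose kl.1 * m.choose kl.2 = (n + m).choose m from
    (Nat.add_choose_eq n m m).symm]

theorem laplace_besselJ0 (α β : ℝ) (n : ℕ) (hα : 0 < α) (hβ : 0 ≤ β) :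
    (∫ x in Set.Ioi (0 : ℝ), Real.exp (-α * x) * x ^ n * besselJ0 (β * Real.sqrt x)) =
      (n.factorial / α ^ (n + 1)) * Real.exp (-β ^ 2 / (4 * α)) *
        laguerre n (β ^ 2 / (4 * α)) := by
  have hα0 : (α : ℝ) ≠ 0 := hα.ne'
  set t : ℝ := β ^ 2 / (4 * α) with ht
  have ht0 : 0 ≤ t := by positivity
  set c : ℕ → ℝ := fun m => (-1:ℝ)^m * (β^2/4)^m / ((m.factorial : ℝ))^2 with hc
  set F : ℕ → ℝ → ℝ := fun m x => c m * (Real.exp (-α*x) * x^(n+m)) with hF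
  -- Step A : rewrite integrand as a tsum
  have stepA : (∫ x in Set.Ioi (0 : ℝ), Real.exp (-α * x) * x ^ n * besselJ0 (β * Real.sqrt x))
      = ∫ x in Set.Ioi (0:ℝ), ∑' m, F m x := by
    refine setIntegral_congr_fun measurableSet_Ioi (fun x hx => ?_)
    rw [Set.mem_Ioi] at hx
    rw [besselJ0, ← tsum_mul_left]
    refine tsum_congr (fun m => ?_)
    have hsq : (β * Real.sqrt x / 2)^(2*m) = (β^2/4)^m * x^m := by
      rw [pow_mul, show (β * Real.sqrt x / 2)^2 = β^2 * (Real.sqrt x ^ 2) / 4 by ring,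
        Real.sq_sqrt hx.le, show β^2 * x / 4 = (β^2/4) * x by ring, mul_pow]
    simp only [hF, hc]
    rw [hsq, pow_add]
    ring
  -- integrability of each term
  have hint : ∀ m, Integrable (F m) (volume.restrict (Set.Ioi (0:ℝ))) := fun m =>
    (lapJ0_integrable_exp_pow α hα (n+m)).const_mul (c m)
  -- value of the norm integrals
  have habs : ∀ m : ℕ, |c m| = (β^2/4)^m / ((m.factorial : ℝ))^2 := by
    intro m
    rw [hc]
    rw [abs_div, abs_mul, abs_pow, abs_pow, abs_neg, abs_one, one_pow, one_mul,
      abs_of_nonneg (by positivity : (0:ℝ) ≤ β^2/4), abs_of_nonneg (by positivity)]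
  have hnorm : ∀ m, (∫ x in Set.Ioi (0:ℝ), ‖F m x‖)
      = |c m| * ((n+m).factorial / α^(n+m+1)) := by
    intro m
    rw [← lapJ0_integral_exp_pow α hα (n+m), ← integral_const_mul]
    refine setIntegral_congr_fun measurableSet_Ioi (fun x hx => ?_)
    rw [Set.mem_Ioi] at hx
    rw [hF]
    rw [Real.norm_eq_abs, abs_mul, abs_of_nonneg (by positivity : (0:ℝ) ≤ Real.exp (-α*x) * x^(n+m))]
  -- factorial identity
  have hfact : ∀ m : ℕ, ((n+m).factorial : ℝ)
      = ((n+m).choose m) * m.factorial * n.factorial := by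
    intro m
    have h := Nat.choose_mul_factorial_mul_factorial (Nat.le_add_left m n)
    rw [show n + m - m = n by omega] at h
    exact_mod_cast h.symm
  -- summability of norm integrals
  have hsum : Summable fun m => ∫ x in Set.Ioi (0:ℝ), ‖F m x‖ := by
    refine Summable.of_nonneg_of_le
      (f := fun m => (n.factorial * 2^n / α^(n+1) : ℝ) * ((2*t)^m / m.factorial))
      (fun m => integral_nonneg (fun x => norm_nonneg _)) (fun m => ?_)
      ((Real.summable_pow_div_factorial (2*t)).mul_left _)
    · 
      rw [hnorm m, habs m, hfact m]
      beta_reduce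
      have hb : ((n+m).choose m : ℝ) ≤ 2^(n+m) := by
        exact_mod_cast lapJ0_choose_le_two_pow (n+m) m
      have heq : (n.factorial * 2^n / α^(n+1) : ℝ) * ((2*t)^m / m.factorial)
          = 2^(n+m) * ((n.factorial : ℝ) * (β^2/4)^m /
              (((m.factorial : ℝ))^2 * α^(n+m+1)) * m.factorial) := by
        rw [ht]
        have h4 : (4*α : ℝ) ≠ 0 := by positivity
        field_simp
        have h1 : α^m * α⁻¹^m = 1 := by rw [← mul_pow, mul_inv_cancel₀ hα0, one_pow]
        have h2 : (1/4:ℝ)^m * 2^m = (1/2)^m := by rw [← mul_pow]; norm_num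
        linear_combination (β^(m*2)*α*α^n*(1/2)^m*2^n) * h1 - (β^(m*2)*α*α^n*2^n) * h2
      rw [heq]
      have heq2 : (β^2/4)^m / ((m.factorial:ℝ))^2 * (((n+m).choose m : ℝ) * m.factorial * n.factorial / α^(n+m+1))
          = ((n+m).choose m : ℝ) * ((n.factorial : ℝ) * (β^2/4)^m /
              (((m.factorial : ℝ))^2 * α^(n+m+1)) * m.factorial) := by
        field_simp
      rw [heq2]
      have hpos : (0:ℝ) ≤ (n.factorial : ℝ) * (β^2/4)^m /
          (((m.factorial : ℝ))^2 * α^(n+m+1)) * m.factorial := by positivity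
      exact mul_le_mul_of_nonneg_right hb hpos
  -- interchange sum and integral
  rw [stepA, ← MeasureTheory.integral_tsum_of_summable_integral_norm hint hsum]
  -- compute each integral
  have hterm : ∀ m : ℕ, (∫ x in Set.Ioi (0:ℝ), F m x)
      = (n.factorial / α^(n+1)) * ((-1:ℝ)^m * (((n+m).choose m : ℕ) : ℝ) * t^m / m.factorial) := by
    intro m
    rw [hF]
    simp only
    rw [integral_const_mul, lapJ0_integral_exp_pow α hα (n+m), hc, hfact m, ht]
    have hm0 : ((m.factorial : ℝ)) ≠ 0 := Nat.cast_ne_zero.mpr m.factorial_ne_zero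
    rw [show α^(n+m+1) = α^(n+1) * α^m by ring]
    field_simp
    have h1 : α^m * α⁻¹^m = 1 := by rw [← mul_pow, mul_inv_cancel₀ hα0, one_pow]
    linear_combination (-(β^(m*2)*((n+m).choose m : ℝ)*(1/4)^m)) * h1
  calc ∑' m, (∫ x in Set.Ioi (0:ℝ), F m x)
      = ∑' m, (n.factorial / α^(n+1)) * ((-1:ℝ)^m * (((n+m).choose m : ℕ) : ℝ) * t^m / m.factorial) :=
        tsum_congr hterm
    _ = (n.factorial / α^(n+1)) * ∑' m, ((-1:ℝ)^m * (((n+m).choose m : ℕ) : ℝ) * t^m / m.factorial) :=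
        tsum_mul_left
    _ = (n.factorial / α^(n+1)) * (Real.exp (-t) * laguerre n t) := by
        rw [lapJ0_key_identity n t]
    _ = (n.factorial / α ^ (n + 1)) * Real.exp (-β ^ 2 / (4 * α)) * laguerre n (β ^ 2 / (4 * α)) := by
        rw [← ht, show -β^2/(4*α) = -t by rw [ht]; ring]
        ring
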